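/- arXiv:1706.01431 — 3 statements merged into one kernel-verified Lean document; each statement's English description precedes it below -/
import Mathlib

section
/- Let G be a finite group and let H, K be subgroups of G such that H·H^x = H^x·H (as sets) for every x ∈ K. If H < K (H is a proper subgroup of K), then H^K < K, i.e., the normal closure of H under conjugation by K is a proper subgroup of K. -/
open Pointwise

/-- The conjugate subgroup `H^x = x⁻¹ H x`. -/
def conjSub {G : Type*} [Group G] (H : Subgroup G) (x : G) : Subgroup G :=
  Subgroup.map ((MulAut.conj x⁻¹).toMonoidHom) H

section Aux

variable {G : Type*} [Group G]

lemma mem_conjSub {H : Subgroup G} {x g : G} :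
    g ∈ conjSub H x ↔ x * g * x⁻¹ ∈ H := by
  simp only [conjSub, Subgroup.mem_map, MulEquiv.coe_toMonoidHom, MulAut.conj_apply, inv_inv]
  constructor
  · rintro ⟨h, hh, rfl⟩
    simpa [mul_assoc] using hh
  · intro hg
    exact ⟨x * g * x⁻¹, hg, by group⟩

lemma conjSub_mul (H : Subgroup G) (a b : G) :
    conjSub H (a * b) = conjSub (conjSub H a) b := by
  ext g
  simp [mem_conjSub, mul_inv_rev, mul_assoc]

lemma conjSub_of_mem {H : Subgroup G} {h : G} (hh : h ∈ H) :
    conjSub H h = H := by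
  ext g
  simp only [mem_conjSub]
  constructor
  · intro hg
    have := H.mul_mem (H.mul_mem (H.inv_mem hh) hg) hh
    simpa [mul_assoc] using this
  · intro hg
    exact H.mul_mem (H.mul_mem hh hg) (H.inv_mem hh)

lemma conjSub_le {H K : Subgroup G} (hHK : H ≤ K) {x : G} (hx : x ∈ K) :
    conjSub H x ≤ K := by
  intro g hg
  rw [mem_conjSub] at hg
  have h1 : x * g * x⁻¹ ∈ K := hHK hg
  have h2 : x⁻¹ * (x * g * x⁻¹) * x ∈ K :=
    K.mul_mem (K.mul_mem (K.inv_mem hx) h1) hx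
  simpa [mul_assoc] using h2

/-- If two subgroups permute, the coe of their sup is the set product. -/
lemma coe_sup_of_comm {A B : Subgroup G}
    (h : (A : Set G) * (B : Set G) = (B : Set G) * (A : Set G)) :
    ((A ⊔ B : Subgroup G) : Set G) = (A : Set G) * (B : Set G) := by
  let S : Subgroup G :=
    { carrier := (A : Set G) * (B : Set G)
      one_mem' := ⟨1, A.one_mem, 1, B.one_mem, by simp⟩
      mul_mem' := by
        intro x y hx hy
        obtain ⟨a, ha, b, hb, hex⟩ := hx
        obtain ⟨a', ha', b', hb', hey⟩ := hy
        have hm : b * a' ∈ (B : Set G) * (A : Set G) := ⟨b, hb, a', ha', rfl⟩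
        rw [← h] at hm
        obtain ⟨a'', ha'', b'', hb'', he⟩ := hm
        have he2 : a'' * b'' = b * a' := he
        refine ⟨a * a'', A.mul_mem ha ha'', b'' * b', B.mul_mem hb'' hb', ?_⟩
        rw [← hex, ← hey]
        calc a * a'' * (b'' * b') = a * (a'' * b'') * b' := by group
          _ = a * (b * a') * b' := by rw [he2]
          _ = a * b * (a' * b') := by group
      inv_mem' := by
        intro x hx
        obtain ⟨a, ha, b, hb, hex⟩ := hx
        rw [← hex]
        have hm : b⁻¹ * a⁻¹ ∈ (B : Set G) * (A : Set G) :=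
          ⟨b⁻¹, B.inv_mem hb, a⁻¹, A.inv_mem ha, rfl⟩
        rw [← h] at hm
        simpa [mul_inv_rev] using hm }
  apply le_antisymm
  · have hAS : A ≤ S := fun a ha => ⟨a, ha, 1, B.one_mem, by simp⟩
    have hBS : B ≤ S := fun b hb => ⟨1, A.one_mem, b, hb, by simp⟩
    exact (sup_le hAS hBS : A ⊔ B ≤ S)
  · rintro x ⟨a, ha, b, hb, rfl⟩
    exact Subgroup.mul_mem _ (Subgroup.mem_sup_left ha) (Subgroup.mem_sup_right hb)

end Aux

theorem stmt1 {G : Type*} [Group G] [Fintype G] (H K : Subgroup G)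
    (hcomm : ∀ x ∈ K, (H : Set G) * (conjSub H x : Set G) = (conjSub H x : Set G) * (H : Set G))
    (hlt : H < K) :
    (⨆ x ∈ K, conjSub H x) < K := by
  have hNK : (⨆ x ∈ K, conjSub H x) ≤ K := iSup₂_le fun x hx => conjSub_le hlt.le hx
  rw [lt_iff_le_and_ne]
  refine ⟨hNK, ?_⟩
  intro hNeq
  -- conjugates pairwise permute
  have comm2 : ∀ y ∈ K, ∀ z ∈ K,
      (conjSub H y : Set G) * (conjSub H z : Set G)
        = (conjSub H z : Set G) * (conjSub H y : Set G) := by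
    intro y hy z hz
    have hx : y * z⁻¹ ∈ K := K.mul_mem hy (K.inv_mem hz)
    have h0 := hcomm _ hx
    have himg := congrArg (fun s => (MulAut.conj z⁻¹) '' s) h0
    simp only [Set.image_mul] at himg
    have e1 : (MulAut.conj z⁻¹) '' (H : Set G) = (conjSub H z : Set G) := by
      rw [conjSub, Subgroup.coe_map]; rfl
    have e2 : (MulAut.conj z⁻¹) '' (conjSub H (y * z⁻¹) : Set G)
        = (conjSub H y : Set G) := by
      have hmap : conjSub H y = Subgroup.map ((MulAut.conj z⁻¹).toMonoidHom)
          (conjSub H (y * z⁻¹)) := by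
        rw [conjSub, conjSub, Subgroup.map_map]
        congr 1
        ext g
        simp [MulAut.conj_apply, mul_assoc]
      rw [hmap, Subgroup.coe_map]
      rfl
    rw [e1, e2] at himg
    exact himg.symm
  -- good subgroups: contain H, contained in K, permute with all conjugates
  have goodH : H ≤ H ∧ H ≤ K ∧ ∀ y ∈ K, (H : Set G) * (conjSub H y : Set G)
      = (conjSub H y : Set G) * (H : Set G) := ⟨le_rfl, hlt.le, hcomm⟩
  set S : Set (Subgroup G) := {T | (H ≤ T ∧ T ≤ K ∧ ∀ y ∈ K, (T : Set G) * (conjSub H y : Set G)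
      = (conjSub H y : Set G) * (T : Set G)) ∧ T ≠ K} with hSdef
  have hHS : H ∈ S := ⟨goodH, hlt.ne⟩
  obtain ⟨T, hTS, hTmax⟩ := Set.Finite.exists_maximalFor id S (Set.toFinite S) ⟨H, hHS⟩
  obtain ⟨⟨hHT, hTK, hTcomm⟩, hTne⟩ := hTS
  -- descent: if T * H^s = K with s ∈ T, then T = K
  have descent : ∀ s ∈ T, ((T : Set G) * (conjSub H s : Set G) = (K : Set G)) → T = K := by
    intro s hs hprod
    apply le_antisymm hTK
    intro k hk
    have hk' : s⁻¹ * k * s ∈ K := K.mul_mem (K.mul_mem (K.inv_mem (hTK hs)) hk) (hTK hs)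
    have hmem : s⁻¹ * k * s ∈ (T : Set G) * (conjSub H s : Set G) := by
      rw [hprod]; exact hk'
    obtain ⟨t, ht, u, hu, he⟩ := hmem
    rw [SetLike.mem_coe, mem_conjSub] at hu
    have he' : t * u = s⁻¹ * k * s := he
    have hk2 : k = (s * t * s⁻¹) * (s * u * s⁻¹) := by
      rw [show (s * t * s⁻¹) * (s * u * s⁻¹) = s * (t * u) * s⁻¹ by group, he']; group
    rw [hk2]
    exact T.mul_mem (T.mul_mem (T.mul_mem hs ht) (T.inv_mem hs)) (hHT hu)
  -- every conjugate lies in T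
  have hconj_le : ∀ y ∈ K, conjSub H y ≤ T := by
    intro y hy
    have hsup : ((T ⊔ conjSub H y : Subgroup G) : Set G)
        = (T : Set G) * (conjSub H y : Set G) := coe_sup_of_comm (hTcomm y hy)
    by_cases hTy : T ⊔ conjSub H y = K
    · -- peel argument: write y = h * t, h ∈ H, t ∈ T
      exfalso
      have hprod : (T : Set G) * (conjSub H y : Set G) = (K : Set G) := by
        rw [← hsup, hTy]
      have hyK : y ∈ (T : Set G) * (conjSub H y : Set G) := by rw [hprod]; exact hy
      obtain ⟨t, ht, u, hu, he⟩ := hyK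
      rw [SetLike.mem_coe, mem_conjSub] at hu
      have he' : t * u = y := he
      -- t = (y*u*y⁻¹)⁻¹ * y, so y = h * t with h := y*u*y⁻¹ ∈ H
      have ht' : t = (y * u * y⁻¹)⁻¹ * y := by
        rw [← he']; group
      have htT : t ∈ T := ht
      have hyt : y = (y * u * y⁻¹) * t := by rw [ht']; group
      have hconj_eq : conjSub H y = conjSub H t := by
        conv_lhs => rw [hyt]
        rw [conjSub_mul, conjSub_of_mem hu]
      have hprod' : (T : Set G) * (conjSub H t : Set G) = (K : Set G) := by
        rw [← hconj_eq]; exact hprod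
      exact hTne (descent t htT hprod')
    · -- maximality forces T ⊔ H^y = T
      have hT'S : (T ⊔ conjSub H y) ∈ S := by
        refine ⟨⟨le_trans hHT le_sup_left, sup_le hTK (conjSub_le hlt.le hy), ?_⟩, hTy⟩
        intro z hz
        calc ((T ⊔ conjSub H y : Subgroup G) : Set G) * (conjSub H z : Set G)
            = (T : Set G) * (conjSub H y : Set G) * (conjSub H z : Set G) := by rw [hsup]
          _ = (T : Set G) * ((conjSub H y : Set G) * (conjSub H z : Set G)) := mul_assoc _ _ _
          _ = (T : Set G) * ((conjSub H z : Set G) * (conjSub H y : Set G)) := by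
              rw [comm2 y hy z hz]
          _ = ((T : Set G) * (conjSub H z : Set G)) * (conjSub H y : Set G) :=
              (mul_assoc _ _ _).symm
          _ = ((conjSub H z : Set G) * (T : Set G)) * (conjSub H y : Set G) := by
              rw [hTcomm z hz]
          _ = (conjSub H z : Set G) * ((T : Set G) * (conjSub H y : Set G)) := mul_assoc _ _ _
          _ = (conjSub H z : Set G) * ((T ⊔ conjSub H y : Subgroup G) : Set G) := by rw [hsup]
      have heq := le_antisymm le_sup_left (hTmax hT'S le_sup_left)
      simp only [id] at heq
      rw [heq]
      exact le_sup_right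
  have hle : (⨆ x ∈ K, conjSub H x) ≤ T := iSup₂_le hconj_le
  rw [hNeq] at hle
  exact hTne (le_antisymm hTK hle)
end

section
/- Let G be a finite group and let K ∈ CD(G) with Z(G) < K a proper containment of the center. Then Z(G) < core_G(K), where core_G(K) = ⋂_{x ∈ G} K^x is the normal core of K in G; that is, the normal core of K strictly contains the center of G. -/
open Pointwise

/-- The Chermak-Delgado measure of a subgroup: `m_G(H) = |H| * |C_G(H)|`. -/
noncomputable def cdMeasure {G : Type*} [Group G] (H : Subgroup G) : Nat :=
  Nat.card H * Nat.card (Subgroup.centralizer (H : Set G))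

/-- The Chermak-Delgado lattice of `G`: the subgroups of maximal Chermak-Delgado measure. -/
def CD (G : Type*) [Group G] : Set (Subgroup G) :=
  {H | ∀ K : Subgroup G, cdMeasure K ≤ cdMeasure H}

section Aux

variable {G : Type*} [Group G]

lemma aux_img_card [Fintype G] (H K : Subgroup G) :
    Nat.card ((↑H : Set G).image (QuotientGroup.mk (s := K)) : Set (G ⧸ K)) *
      Nat.card ↥(H ⊓ K) = Nat.card ↥H := by
  classical
  have horb : MulAction.orbit H ((1 : G) : G ⧸ K) =
      (↑H : Set G).image (QuotientGroup.mk (s := K)) := by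
    ext q
    constructor
    · rintro ⟨⟨h, hh⟩, rfl⟩
      exact ⟨h, hh, by change (h : G ⧸ K) = ((h * 1 : G) : G ⧸ K); rw [mul_one]⟩
    · rintro ⟨h, hh, rfl⟩
      exact ⟨⟨h, hh⟩, by change ((h * 1 : G) : G ⧸ K) = (h : G ⧸ K); rw [mul_one]⟩
  have hstab : MulAction.stabilizer H ((1 : G) : G ⧸ K) = K.subgroupOf H := by
    ext ⟨h, hh⟩
    rw [MulAction.mem_stabilizer_iff, Subgroup.mem_subgroupOf]
    change ((h * 1 : G) : G ⧸ K) = ((1 : G) : G ⧸ K) ↔ h ∈ K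
    simp [QuotientGroup.eq]
  have hcard := MulAction.card_orbit_mul_card_stabilizer_eq_card_group H ((1 : G) : G ⧸ K)
  have h1 : Nat.card (MulAction.orbit H ((1 : G) : G ⧸ K)) *
      Nat.card (MulAction.stabilizer H ((1 : G) : G ⧸ K)) = Nat.card ↥H := by
    simpa [Nat.card_eq_fintype_card] using hcard
  rw [horb, hstab] at h1
  have h2 : Nat.card ↥(K.subgroupOf H) = Nat.card ↥(H ⊓ K) := by
    rw [show K.subgroupOf H = (H ⊓ K).subgroupOf H by rw [inf_comm, Subgroup.inf_subgroupOf_right]]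
    exact Nat.card_congr (Subgroup.subgroupOfEquivOfLe inf_le_left).toEquiv
  rw [h2] at h1
  exact h1

/-- `|HK| * |H ⊓ K| = |H| * |K|` for the setwise product of two subgroups. -/
lemma aux_card_mul_inf [Fintype G] (H K : Subgroup G) :
    Nat.card ((↑H : Set G) * (↑K : Set G) : Set G) * Nat.card ↥(H ⊓ K) =
      Nat.card ↥H * Nat.card ↥K := by
  classical
  rw [Subgroup.card_mul_eq_card_subgroup_mul_card_quotient K (↑H : Set G)]
  rw [mul_assoc, aux_img_card H K, mul_comm]

lemma conjSub_conjSub (H : Subgroup G) (a b : G) :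
    conjSub (conjSub H a) b = conjSub H (a * b) := by
  ext g
  simp only [mem_conjSub]
  have e : a * (b * g * b⁻¹) * a⁻¹ = a * b * g * (a * b)⁻¹ := by group
  rw [e]

lemma conjSub_one (H : Subgroup G) : conjSub H 1 = H := by
  ext g; simp [mem_conjSub]

lemma conjSub_mono {H K : Subgroup G} (h : H ≤ K) (x : G) : conjSub H x ≤ conjSub K x := by
  intro g hg
  rw [mem_conjSub] at hg ⊢
  exact h hg

lemma card_conjSub (H : Subgroup G) (x : G) : Nat.card (conjSub H x) = Nat.card H :=
  (Nat.card_congr (Subgroup.equivMapOfInjective H _ (MulAut.conj x⁻¹).injective).toEquiv).symm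

lemma centralizer_conjSub (H : Subgroup G) (x : G) :
    Subgroup.centralizer (conjSub H x : Set G) = conjSub (Subgroup.centralizer (H : Set G)) x := by
  ext g
  rw [mem_conjSub, Subgroup.mem_centralizer_iff, Subgroup.mem_centralizer_iff]
  constructor
  · intro hc h hh
    have := hc (x⁻¹ * h * x)
      (by rw [SetLike.mem_coe, mem_conjSub]; simpa [mul_assoc] using hh)
    have e : x * (x⁻¹ * h * x * g) * x⁻¹ = x * (g * (x⁻¹ * h * x)) * x⁻¹ := by rw [this]
    calc h * (x * g * x⁻¹) = x * (x⁻¹ * h * x * g) * x⁻¹ := by group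
    _ = x * (g * (x⁻¹ * h * x)) * x⁻¹ := e
    _ = x * g * x⁻¹ * h := by group
  · intro hc h hh
    rw [SetLike.mem_coe, mem_conjSub] at hh
    have := hc (x * h * x⁻¹) hh
    calc h * g = x⁻¹ * (x * h * x⁻¹ * (x * g * x⁻¹)) * x := by group
    _ = x⁻¹ * (x * g * x⁻¹ * (x * h * x⁻¹)) * x := by rw [this]
    _ = g * h := by group

lemma cdMeasure_conjSub (H : Subgroup G) (x : G) :
    cdMeasure (conjSub H x) = cdMeasure H := by
  unfold cdMeasure
  rw [card_conjSub, centralizer_conjSub, card_conjSub]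

lemma conjSub_mem_CD {H : Subgroup G} (hH : H ∈ CD G) (x : G) : conjSub H x ∈ CD G := by
  intro X
  rw [cdMeasure_conjSub]
  exact hH X

lemma conjSub_of_mem_centralizer {H : Subgroup G} {t : G}
    (ht : t ∈ Subgroup.centralizer (H : Set G)) : conjSub H t = H := by
  ext g
  rw [mem_conjSub]
  rw [Subgroup.mem_centralizer_iff] at ht
  constructor
  · intro hg
    have e := ht _ hg
    have e2 : t * g = t * (t * g * t⁻¹) := by rw [← e]; group
    have e3 : g = t * g * t⁻¹ := mul_left_cancel e2
    rw [e3]; exact hg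
  · intro hg
    have e := ht g hg
    have e2 : t * g * t⁻¹ = g := by rw [← e]; group
    rw [e2]; exact hg

lemma centralizer_sup (H K : Subgroup G) :
    Subgroup.centralizer ((H ⊔ K : Subgroup G) : Set G) =
      Subgroup.centralizer (H : Set G) ⊓ Subgroup.centralizer (K : Set G) := by
  apply le_antisymm
  · exact le_inf (Subgroup.centralizer_le (SetLike.coe_subset_coe.mpr le_sup_left))
      (Subgroup.centralizer_le (SetLike.coe_subset_coe.mpr le_sup_right))
  · intro g hg
    obtain ⟨hgH, hgK⟩ := hg
    rw [Subgroup.mem_centralizer_iff]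
    intro h hh
    have : (H ⊔ K : Subgroup G) ≤ Subgroup.centralizer {g} := by
      apply sup_le
      · intro a ha
        rw [Subgroup.mem_centralizer_iff]
        rintro y rfl
        exact (Subgroup.mem_centralizer_iff.mp hgH a ha).symm
      · intro a ha
        rw [Subgroup.mem_centralizer_iff]
        rintro y rfl
        exact (Subgroup.mem_centralizer_iff.mp hgK a ha).symm
    have := this hh
    rw [Subgroup.mem_centralizer_iff] at this
    exact (this g rfl).symm

lemma mul_subset_coe_sup (H K : Subgroup G) :
    ((H : Set G) * (K : Set G)) ⊆ ((H ⊔ K : Subgroup G) : Set G) := by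
  rintro z ⟨a, ha, b, hb, rfl⟩
  exact mul_mem (le_sup_left (a := H) (b := K) ha) (le_sup_right (a := H) (b := K) hb)

end Aux

section Main

variable {G : Type*} [Group G] [Fintype G]

lemma cd_card_pos (H : Subgroup G) : 0 < Nat.card H := Nat.card_pos

lemma cdMeasure_pos (H : Subgroup G) : 0 < cdMeasure H :=
  Nat.mul_pos Nat.card_pos Nat.card_pos

lemma CD_measure_eq {H K : Subgroup G} (hH : H ∈ CD G) (hK : K ∈ CD G) :
    cdMeasure H = cdMeasure K := le_antisymm (hK H) (hH K)

/-- The Chermak-Delgado lattice is closed under intersections. -/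
lemma CD_inf {H K : Subgroup G} (hH : H ∈ CD G) (hK : K ∈ CD G) : H ⊓ K ∈ CD G := by
  intro X
  refine le_trans (hH X) ?_
  -- notation
  set h := Nat.card H with hh
  set k := Nat.card K with hk
  set a := Nat.card ↥(H ⊓ K) with ha
  set A := Nat.card ↥(H ⊔ K) with hA
  set ch := Nat.card (Subgroup.centralizer (H : Set G)) with hch
  set ck := Nat.card (Subgroup.centralizer (K : Set G)) with hck
  set ci := Nat.card (Subgroup.centralizer ((H ⊓ K : Subgroup G) : Set G)) with hci
  set cA := Nat.card (Subgroup.centralizer ((H ⊔ K : Subgroup G) : Set G)) with hcA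
  set P := Nat.card (((H : Set G) * (K : Set G) : Set G)) with hP
  set Q := Nat.card ((((Subgroup.centralizer (H : Set G) : Subgroup G) : Set G) *
    ((Subgroup.centralizer (K : Set G) : Subgroup G) : Set G) : Set G)) with hQ
  have f4 : P * a = h * k := aux_card_mul_inf H K
  have fPA : P ≤ A := by
    rw [hP, hA]
    exact Nat.card_mono (Set.toFinite _) (mul_subset_coe_sup H K)
  have f1 : Q * cA = ch * ck := by
    have := aux_card_mul_inf (Subgroup.centralizer (H : Set G)) (Subgroup.centralizer (K : Set G))
    rw [← centralizer_sup] at this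
    exact this
  have fQ : Q ≤ ci := by
    rw [hQ, hci]
    apply Nat.card_mono (Set.toFinite _)
    have h1 : Subgroup.centralizer (H : Set G) ≤
        Subgroup.centralizer ((H ⊓ K : Subgroup G) : Set G) :=
      Subgroup.centralizer_le (SetLike.coe_subset_coe.mpr inf_le_left)
    have h2 : Subgroup.centralizer (K : Set G) ≤
        Subgroup.centralizer ((H ⊓ K : Subgroup G) : Set G) :=
      Subgroup.centralizer_le (SetLike.coe_subset_coe.mpr inf_le_right)
    rintro z ⟨u, hu, v, hv, rfl⟩
    exact mul_mem (h1 hu) (h2 hv)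
  have f5 : A * cA ≤ h * ch := hH (H ⊔ K)
  have hmk : h * ch = k * ck := CD_measure_eq hH hK
  -- (h*ch)^2 = (P*a)*(Q*cA) ≤ (A*cA)*(a*ci) ≤ (h*ch)*(a*ci)
  have key : (h * ch) * (h * ch) ≤ (h * ch) * (a * ci) := by
    calc (h * ch) * (h * ch) = (h * ch) * (k * ck) := by rw [hmk]
    _ = (h * k) * (ch * ck) := by ring
    _ = (P * a) * (Q * cA) := by rw [f4, f1]
    _ = (P * Q) * (a * cA) := by ring
    _ ≤ (A * ci) * (a * cA) := Nat.mul_le_mul_right _ (Nat.mul_le_mul fPA fQ)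
    _ = (A * cA) * (a * ci) := by ring
    _ ≤ (h * ch) * (a * ci) := Nat.mul_le_mul_right _ f5
  have hpos : 0 < h * ch := cdMeasure_pos H
  have := Nat.le_of_mul_le_mul_left key hpos
  exact this

/-- Double centralizer of a CD member. -/
lemma CD_centralizer_centralizer {H : Subgroup G} (hH : H ∈ CD G) :
    Subgroup.centralizer ((Subgroup.centralizer (H : Set G) : Subgroup G) : Set G) = H := by
  have hle : H ≤ Subgroup.centralizer
      ((Subgroup.centralizer (H : Set G) : Subgroup G) : Set G) := by
    intro h hh
    rw [Subgroup.mem_centralizer_iff]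
    intro c hc
    exact (Subgroup.mem_centralizer_iff.mp hc h hh).symm
  have hcard : Nat.card (Subgroup.centralizer
      ((Subgroup.centralizer (H : Set G) : Subgroup G) : Set G)) ≤ Nat.card H := by
    have := hH (Subgroup.centralizer (H : Set G))
    unfold cdMeasure at this
    rw [mul_comm (Nat.card H)] at this
    exact Nat.le_of_mul_le_mul_left this Nat.card_pos
  exact (Subgroup.eq_of_le_of_card_ge hle hcard).symm

lemma CD_iInf_conj {K : Subgroup G} (hK : K ∈ CD G) : (⨅ x : G, conjSub K x) ∈ CD G := by
  classical
  have main : ∀ s : Finset G, (s.inf (conjSub K) ⊓ K) ∈ CD G := by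
    intro s
    induction s using Finset.induction with
    | empty => simpa using hK
    | insert x s hx ih =>
      rw [Finset.inf_insert, inf_assoc]
      exact CD_inf (conjSub_mem_CD hK _) ih
  have heq : (⨅ x : G, conjSub K x) = Finset.univ.inf (conjSub K) ⊓ K := by
    have h1 : (⨅ x : G, conjSub K x) = Finset.univ.inf (conjSub K) := by
      rw [Finset.inf_eq_iInf]
      simp
    rw [h1]
    have h2 : Finset.univ.inf (conjSub K) ≤ K := by
      refine le_trans (Finset.inf_le (Finset.mem_univ 1)) ?_
      rw [conjSub_one]
    exact (inf_eq_left.mpr h2).symm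
  rw [heq]
  exact main Finset.univ

lemma center_le_conjSub {H : Subgroup G} (hZ : Subgroup.center G ≤ H) (x : G) :
    Subgroup.center G ≤ conjSub H x := by
  intro z hz
  rw [mem_conjSub]
  have : x * z * x⁻¹ = z := by
    have e := Subgroup.mem_center_iff.mp hz x
    rw [e]; group
  rw [this]
  exact hZ hz

end Main

theorem stmt3 {G : Type*} [Group G] [Fintype G] (K : Subgroup G)
    (hK : K ∈ CD G) (hlt : Subgroup.center G < K) :
    Subgroup.center G < ⨅ x : G, conjSub K x := by
  classical
  set Z := Subgroup.center G with hZdef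
  have hcorele : ∀ H : Subgroup G, Z ≤ H → Z ≤ ⨅ x : G, conjSub H x := fun H h =>
    le_iInf fun x => center_le_conjSub h x
  have hZcore : Z ≤ ⨅ x : G, conjSub K x := hcorele K hlt.le
  rw [lt_iff_le_and_ne]
  refine ⟨hZcore, ?_⟩
  intro hEq
  -- Z is in the Chermak-Delgado lattice
  have hZCD : Z ∈ CD G := by rw [hEq]; exact CD_iInf_conj hK
  have hcentZ : Subgroup.centralizer (Z : Set G) = ⊤ := by
    rw [eq_top_iff]
    intro g _
    rw [Subgroup.mem_centralizer_iff]
    intro h hh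
    exact (Subgroup.mem_center_iff.mp hh g).symm
  have hmZ : cdMeasure Z = Nat.card Z * Nat.card G := by
    unfold cdMeasure
    rw [hcentZ, Subgroup.card_top]
  -- pick a minimal counterexample B
  have hKprop : K ∈ CD G ∧ Z < K ∧ (⨅ y : G, conjSub K y) = Z := ⟨hK, hlt, hEq.symm⟩
  obtain ⟨B, hBprop, hBmin⟩ : ∃ B : Subgroup G,
      (B ∈ CD G ∧ Z < B ∧ (⨅ y : G, conjSub B y) = Z) ∧
      ∀ H : Subgroup G, (H ∈ CD G ∧ Z < H ∧ (⨅ y : G, conjSub H y) = Z) →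
        Nat.card B ≤ Nat.card H := by
    have hne : {n | ∃ H : Subgroup G,
        (H ∈ CD G ∧ Z < H ∧ (⨅ y : G, conjSub H y) = Z) ∧ Nat.card H = n}.Nonempty :=
      ⟨Nat.card K, K, hKprop, rfl⟩
    obtain ⟨B, hBX, hBn⟩ := Nat.sInf_mem hne
    exact ⟨B, hBX, fun H hH => hBn ▸ Nat.sInf_le ⟨H, hH, rfl⟩⟩
  obtain ⟨hBCD, hZB, hBcore⟩ := hBprop
  -- B is not normal
  obtain ⟨x, hx⟩ : ∃ x : G, conjSub B x ≠ B := by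
    by_contra h
    push_neg at h
    have hBB : (⨅ y : G, conjSub B y) = B := le_antisymm
      (le_trans (iInf_le _ 1) (by rw [conjSub_one]))
      (le_iInf fun y => (h y).ge)
    rw [hBB] at hBcore
    exact ne_of_gt hZB hBcore
  -- B ⊓ B^x = Z
  have hPZ : B ⊓ conjSub B x = Z := by
    have hZP : Z ≤ B ⊓ conjSub B x := le_inf hZB.le (center_le_conjSub hZB.le x)
    by_contra hne
    have hlt' : Z < B ⊓ conjSub B x := lt_of_le_of_ne hZP (fun h => hne h.symm)
    have hPCD : B ⊓ conjSub B x ∈ CD G := CD_inf hBCD (conjSub_mem_CD hBCD x)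
    have hPcore : (⨅ y : G, conjSub (B ⊓ conjSub B x) y) = Z := by
      apply le_antisymm
      · refine le_trans (iInf_mono fun y =>
          conjSub_mono (inf_le_left : B ⊓ conjSub B x ≤ B) y) ?_
        exact hBcore.le
      · exact hcorele _ hZP
    have hmin := hBmin _ ⟨hPCD, hlt', hPcore⟩
    have hEqB : B ⊓ conjSub B x = B := Subgroup.eq_of_le_of_card_ge inf_le_left hmin
    have hBle : B ≤ conjSub B x := inf_eq_left.mp hEqB
    exact hx (Subgroup.eq_of_le_of_card_ge hBle (by rw [card_conjSub])).symm
  -- centralizers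
  set T := Subgroup.centralizer (B : Set G) with hTdef
  set Tx := Subgroup.centralizer ((conjSub B x : Subgroup G) : Set G) with hTxdef
  have hcTx : Nat.card Tx = Nat.card T := by
    rw [hTxdef, centralizer_conjSub, card_conjSub, hTdef]
  have hmB : Nat.card B * Nat.card T = Nat.card Z * Nat.card G := by
    have h1 := CD_measure_eq hBCD hZCD
    rw [hmZ] at h1
    unfold cdMeasure at h1
    exact h1
  -- both B and B^x centralize T ⊓ Tx
  have hBJ : B ≤ Subgroup.centralizer ((T ⊓ Tx : Subgroup G) : Set G) := by
    have h1 : B ≤ Subgroup.centralizer (T : Set G) := by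
      intro b hb
      rw [Subgroup.mem_centralizer_iff]
      intro t ht
      exact (Subgroup.mem_centralizer_iff.mp ht b hb).symm
    exact le_trans h1 (Subgroup.centralizer_le (SetLike.coe_subset_coe.mpr inf_le_left))
  have hBxJ : conjSub B x ≤ Subgroup.centralizer ((T ⊓ Tx : Subgroup G) : Set G) := by
    have h1 : conjSub B x ≤ Subgroup.centralizer (Tx : Set G) := by
      intro b hb
      rw [Subgroup.mem_centralizer_iff]
      intro t ht
      exact (Subgroup.mem_centralizer_iff.mp ht b hb).symm
    exact le_trans h1 (Subgroup.centralizer_le (SetLike.coe_subset_coe.mpr inf_le_right))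
  have hprod1 : ((B : Set G) * ((conjSub B x : Subgroup G) : Set G)) ⊆
      ((Subgroup.centralizer ((T ⊓ Tx : Subgroup G) : Set G) : Subgroup G) : Set G) := by
    rintro z ⟨a, ha, b, hb, rfl⟩
    exact mul_mem (hBJ ha) (hBxJ hb)
  have hcardJ : Nat.card B * Nat.card B ≤
      Nat.card (Subgroup.centralizer ((T ⊓ Tx : Subgroup G) : Set G)) * Nat.card Z := by
    have h1 := aux_card_mul_inf B (conjSub B x)
    rw [hPZ, card_conjSub] at h1
    rw [← h1]
    exact Nat.mul_le_mul_right _ (Nat.card_mono (Set.toFinite _) hprod1)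
  have hI : Nat.card (T ⊓ Tx : Subgroup G) *
      Nat.card (Subgroup.centralizer ((T ⊓ Tx : Subgroup G) : Set G)) ≤
      Nat.card Z * Nat.card G := by
    have h1 := hZCD (T ⊓ Tx)
    rw [hmZ] at h1
    unfold cdMeasure at h1
    exact h1
  have hdelta : Nat.card ((T : Set G) * (Tx : Set G) : Set G) *
      Nat.card (T ⊓ Tx : Subgroup G) = Nat.card T * Nat.card T := by
    have h1 := aux_card_mul_inf T Tx
    rw [hcTx] at h1
    exact h1
  -- conclude T * Tx = G
  have hSge : Nat.card G ≤ Nat.card ((T : Set G) * (Tx : Set G) : Set G) := by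
    set cZ := Nat.card Z
    set cG := Nat.card G
    set cB := Nat.card B
    set cT := Nat.card T
    set cI := Nat.card (T ⊓ Tx : Subgroup G)
    set cJ := Nat.card (Subgroup.centralizer ((T ⊓ Tx : Subgroup G) : Set G))
    set S := Nat.card ((T : Set G) * (Tx : Set G) : Set G)
    have key : (cZ * cG) * (cZ * cG) ≤ (S * cZ) * (cZ * cG) := by
      calc (cZ * cG) * (cZ * cG) = (cB * cT) * (cB * cT) := by rw [hmB]
      _ = (cT * cT) * (cB * cB) := by ring
      _ = (S * cI) * (cB * cB) := by rw [hdelta]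
      _ = S * (cI * (cB * cB)) := by ring
      _ ≤ S * (cI * (cJ * cZ)) := Nat.mul_le_mul_left _ (Nat.mul_le_mul_left _ hcardJ)
      _ = S * ((cI * cJ) * cZ) := by ring
      _ ≤ S * ((cZ * cG) * cZ) := Nat.mul_le_mul_left _ (Nat.mul_le_mul_right _ hI)
      _ = (S * cZ) * (cZ * cG) := by ring
    have hpos : 0 < cZ * cG := Nat.mul_pos Nat.card_pos Nat.card_pos
    have h2 : cZ * cG ≤ S * cZ := Nat.le_of_mul_le_mul_right key hpos
    have h3 : cG * cZ ≤ S * cZ := by rw [mul_comm cZ cG] at h2; exact h2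
    exact Nat.le_of_mul_le_mul_right h3 Nat.card_pos
  have hset : ((T : Set G) * (Tx : Set G)) = Set.univ := by
    apply Set.eq_of_subset_of_ncard_le (Set.subset_univ _)
    rw [Set.ncard_univ, ← Nat.card_coe_set_eq]
    exact hSge
  obtain ⟨t, ht, t', ht', hx_eq⟩ : ∃ t ∈ (T : Set G), ∃ t' ∈ (Tx : Set G), t * t' = x := by
    have hx' : x ∈ ((T : Set G) * (Tx : Set G)) := by rw [hset]; trivial
    exact Set.mem_mul.mp hx'
  -- final contradiction
  have e1 : conjSub B x = conjSub B t' := by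
    rw [← hx_eq, ← conjSub_conjSub, conjSub_of_mem_centralizer ht]
  have e2 : conjSub (conjSub B x) t'⁻¹ = conjSub B x :=
    conjSub_of_mem_centralizer (inv_mem (SetLike.mem_coe.mp ht'))
  have efin : conjSub B x = B := by
    conv_lhs => rw [← e2]
    rw [e1, conjSub_conjSub, mul_inv_cancel, conjSub_one]
  exact hx efin
end

section
/- Let G be a finite group with G ∈ CD(G). Then every atom of CD(G) and every coatom of CD(G) is a normal subgroup of G. Here an atom of CD(G) is an element A ∈ CD(G) with T ≺ A, where T is the least element of CD(G), and a coatom is an element B ∈ CD(G) with B ≺ G. -/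
open Pointwise

namespace CDaux

open Subgroup

variable {G : Type*} [Group G]

lemma decomp (H K : Subgroup G) (z : (↑H * ↑K : Set G)) :
    ∃ p : H × K, (p.1 : G) * (p.2 : G) = (z : G) := by
  obtain ⟨x, hx, y, hy, hxy⟩ := Set.mem_mul.mp z.2
  exact ⟨(⟨x, hx⟩, ⟨y, hy⟩), hxy⟩

noncomputable def pFun (H K : Subgroup G) (zd : (↑H * ↑K : Set G) × ↥(H ⊓ K)) : H × K :=
  ((decomp H K zd.1).choose.1 * ⟨zd.2, (Subgroup.mem_inf.mp zd.2.2).1⟩,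
   (⟨zd.2, (Subgroup.mem_inf.mp zd.2.2).2⟩ : K)⁻¹ * (decomp H K zd.1).choose.2)

lemma pFun_mul (H K : Subgroup G) (zd : (↑H * ↑K : Set G) × ↥(H ⊓ K)) :
    ((pFun H K zd).1 : G) * ((pFun H K zd).2 : G) = (zd.1 : G) := by
  have hspec := (decomp H K zd.1).choose_spec
  simp only [pFun]
  push_cast
  rw [mul_assoc, ← mul_assoc (zd.2 : G), mul_inv_cancel, one_mul]
  exact hspec

lemma pFun_bij (H K : Subgroup G) : Function.Bijective (pFun H K) := by
  constructor
  · rintro ⟨z, d⟩ ⟨z', d'⟩ h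
    have hz : z = z' := by
      apply Subtype.ext
      rw [← pFun_mul H K ⟨z, d⟩, ← pFun_mul H K ⟨z', d'⟩, h]
    subst hz
    have h1 : ((pFun H K ⟨z, d⟩).1 : G) = ((pFun H K ⟨z, d'⟩).1 : G) := by rw [h]
    simp only [pFun] at h1
    push_cast at h1
    have : (d : G) = (d' : G) := mul_left_cancel h1
    simp [Subtype.ext this]
  · rintro ⟨h, k⟩
    set z : (↑H * ↑K : Set G) := ⟨(h : G) * k, Set.mul_mem_mul h.2 k.2⟩ with hzdef
    have hspec := (decomp H K z).choose_spec
    set p := (decomp H K z).choose with hp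
    have hdG : ((p.1 : G))⁻¹ * h = (p.2 : G) * (k : G)⁻¹ := by
      rw [inv_mul_eq_iff_eq_mul, eq_comm, ← mul_assoc, mul_inv_eq_iff_eq_mul]
      exact hspec
    have hd : ((p.1 : G))⁻¹ * h ∈ H ⊓ K := by
      refine Subgroup.mem_inf.mpr ⟨mul_mem (inv_mem p.1.2) h.2, ?_⟩
      rw [hdG]; exact mul_mem p.2.2 (inv_mem k.2)
    refine ⟨⟨z, ⟨_, hd⟩⟩, ?_⟩
    simp only [pFun]
    refine Prod.ext ?_ ?_
    · apply Subtype.ext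
      push_cast
      group
      change ((p.1 : G)) * (p.1 : G) ^ (-1 : ℤ) * h = h
      group
    · apply Subtype.ext
      push_cast [hdG]
      group
      change (k : G) * (p.2 : G) ^ (-1 : ℤ) * (p.2 : G) = k
      group

lemma card_mul_mul_card_inf (H K : Subgroup G) :
    Nat.card (↑H * ↑K : Set G) * Nat.card ↥(H ⊓ K) = Nat.card H * Nat.card K := by
  rw [← Nat.card_prod, ← Nat.card_prod]
  exact Nat.card_congr (Equiv.ofBijective _ (pFun_bij H K))

lemma centralizer_sup' (H K : Subgroup G) :
    Subgroup.centralizer ↑(H ⊔ K)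
      = Subgroup.centralizer (H : Set G) ⊓ Subgroup.centralizer (K : Set G) := by
  apply le_antisymm
  · exact le_inf (centralizer_le (by exact_mod_cast le_sup_left))
      (centralizer_le (by exact_mod_cast le_sup_right))
  · rintro x ⟨hx1, hx2⟩
    rw [Subgroup.mem_centralizer_iff]
    intro h hh
    have hsup : H ⊔ K ≤ Subgroup.centralizer {x} := by
      apply sup_le
      · intro a ha
        rw [Subgroup.mem_centralizer_iff]
        rintro y rfl
        exact (Subgroup.mem_centralizer_iff.mp hx1 a ha).symm
      · intro a ha
        rw [Subgroup.mem_centralizer_iff]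
        rintro y rfl
        exact (Subgroup.mem_centralizer_iff.mp hx2 a ha).symm
    exact (Subgroup.mem_centralizer_iff.mp (hsup hh) x rfl).symm

lemma mul_subset_sup (H K : Subgroup G) : (↑H * ↑K : Set G) ⊆ ↑(H ⊔ K) := by
  rw [Set.mul_subset_iff]
  intro x hx y hy
  exact mul_mem (le_sup_left (a := H) (b := K) hx) (le_sup_right (a := H) (b := K) hy)

lemma cent_mul_subset (H K : Subgroup G) :
    (↑(Subgroup.centralizer (H : Set G)) * ↑(Subgroup.centralizer (K : Set G)) : Set G)
      ⊆ ↑(Subgroup.centralizer ((H ⊓ K : Subgroup G) : Set G)) := by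
  rw [Set.mul_subset_iff]
  intro x hx y hy
  rw [SetLike.mem_coe, Subgroup.mem_centralizer_iff]
  intro z hz
  have h1 := Subgroup.mem_centralizer_iff.mp hx z (Subgroup.mem_inf.mp hz).1
  have h2 := Subgroup.mem_centralizer_iff.mp hy z (Subgroup.mem_inf.mp hz).2
  calc z * (x * y) = (z * x) * y := by group
    _ = (x * z) * y := by rw [h1]
    _ = x * (z * y) := by group
    _ = x * (y * z) := by rw [h2]
    _ = (x * y) * z := by group

lemma centralizer_map_conj (g : G) (H : Subgroup G) :
    Subgroup.centralizer ↑(H.map (MulAut.conj g).toMonoidHom)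
      = (Subgroup.centralizer (H : Set G)).map (MulAut.conj g).toMonoidHom := by
  ext x
  rw [Subgroup.mem_map_equiv, Subgroup.mem_centralizer_iff, Subgroup.mem_centralizer_iff]
  simp only [MulAut.conj_symm_apply]
  constructor
  · intro hx h hh
    have key : (g * h * g⁻¹) * x = x * (g * h * g⁻¹) := by
      refine hx _ (SetLike.mem_coe.mpr (Subgroup.mem_map_equiv.mpr ?_))
      simp only [MulAut.conj_symm_apply]
      have : g⁻¹ * (g * h * g⁻¹) * g = h := by group
      rwa [this]
    calc h * (g⁻¹ * x * g) = g⁻¹ * ((g * h * g⁻¹) * x) * g := by group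
      _ = g⁻¹ * (x * (g * h * g⁻¹)) * g := by rw [key]
      _ = (g⁻¹ * x * g) * h := by group
  · intro hx h hh
    rw [SetLike.mem_coe, Subgroup.mem_map_equiv] at hh
    have key := hx _ hh
    simp only [MulAut.conj_symm_apply] at key
    have h2 : h = g * (g⁻¹ * h * g) * g⁻¹ := by group
    rw [h2]
    calc (g * (g⁻¹ * h * g) * g⁻¹) * x = g * ((g⁻¹ * h * g) * (g⁻¹ * x * g)) * g⁻¹ := by group
      _ = g * ((g⁻¹ * x * g) * (g⁻¹ * h * g)) * g⁻¹ := by rw [key]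
      _ = x * (g * (g⁻¹ * h * g) * g⁻¹) := by group

lemma card_map_conj (g : G) (H : Subgroup G) :
    Nat.card (H.map (MulAut.conj g).toMonoidHom) = Nat.card H :=
  (Nat.card_congr (Subgroup.equivMapOfInjective H _ (MulAut.conj g).injective).toEquiv).symm

lemma cdMeasure_map_conj (g : G) (H : Subgroup G) :
    cdMeasure (H.map (MulAut.conj g).toMonoidHom) = cdMeasure H := by
  unfold cdMeasure
  rw [card_map_conj, centralizer_map_conj, card_map_conj]

lemma map_conj_self {D : Subgroup G} {x : G} (hx : x ∈ D) :
    D.map (MulAut.conj x).toMonoidHom = D := by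
  ext y
  rw [Subgroup.mem_map_equiv]
  constructor
  · intro h
    have hy : y = x * ((MulAut.conj x).symm y) * x⁻¹ := by
      simp only [MulAut.conj_symm_apply]; group
    rw [hy]
    exact mul_mem (mul_mem hx h) (inv_mem hx)
  · intro h
    show (MulAut.conj x).symm y ∈ D
    simp only [MulAut.conj_symm_apply]
    exact mul_mem (mul_mem (inv_mem hx) h) hx

lemma map_conj_mul (a b : G) (D : Subgroup G) :
    D.map (MulAut.conj (a * b)).toMonoidHom
      = (D.map (MulAut.conj b).toMonoidHom).map (MulAut.conj a).toMonoidHom := by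
  rw [Subgroup.map_map]
  congr 1
  ext y
  simp [mul_assoc]

/-- The key trick: if `D * D^w = G` then `D^w = D`. -/
lemma conj_eq_of_mul_eq_univ (D : Subgroup G) (w : G)
    (h : (↑D * ↑(D.map (MulAut.conj w).toMonoidHom) : Set G) = Set.univ) :
    D.map (MulAut.conj w).toMonoidHom = D := by
  have hw : w⁻¹ ∈ (↑D * ↑(D.map (MulAut.conj w).toMonoidHom) : Set G) := by
    rw [h]; trivial
  obtain ⟨x, hx, y, hy, hxy⟩ := Set.mem_mul.mp hw
  rw [SetLike.mem_coe] at hx hy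
  have hwxy : w = y⁻¹ * x⁻¹ := by
    rw [← mul_inv_rev, hxy, inv_inv]
  have hmap : D.map (MulAut.conj w).toMonoidHom = D.map (MulAut.conj y⁻¹).toMonoidHom := by
    rw [hwxy, map_conj_mul, map_conj_self (inv_mem hx)]
  have hyD : y ∈ D := by
    rw [hmap] at hy
    obtain ⟨dd, hdd, hde⟩ := Subgroup.mem_map.mp hy
    have hde' : y⁻¹ * dd * y = y := by
      have : (MulAut.conj y⁻¹).toMonoidHom dd = y⁻¹ * dd * y := by
        simp [MulAut.conj_apply]
      rwa [this] at hde
    have : dd = y := by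
      have h2 : y * (y⁻¹ * dd * y) * y⁻¹ = y * y * y⁻¹ := by rw [hde']
      calc dd = y * (y⁻¹ * dd * y) * y⁻¹ := by group
        _ = y * y * y⁻¹ := h2
        _ = y := by group
    rwa [this] at hdd
  rw [hmap, map_conj_self (inv_mem hyD)]

lemma normal_of_conj_fixed {D : Subgroup G}
    (h : ∀ g : G, D.map (MulAut.conj g).toMonoidHom = D) : D.Normal := by
  constructor
  intro n hn g
  rw [← h g]
  exact Subgroup.mem_map.mpr ⟨n, hn, rfl⟩

section Finite

variable [Fintype G]

lemma card_pos (H : Subgroup G) : 0 < Nat.card H := Nat.card_pos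

lemma card_le_of_le {H K : Subgroup G} (h : H ≤ K) : Nat.card H ≤ Nat.card K := by
  rw [← SetLike.coe_sort_coe, ← SetLike.coe_sort_coe, Nat.card_coe_set_eq,
    Nat.card_coe_set_eq]
  exact Set.ncard_le_ncard h (Set.toFinite _)

lemma eq_of_le_of_card_le {H K : Subgroup G} (h : H ≤ K) (hc : Nat.card K ≤ Nat.card H) :
    H = K := by
  apply SetLike.coe_injective
  apply Set.eq_of_subset_of_ncard_le h
  rwa [← Nat.card_coe_set_eq, ← Nat.card_coe_set_eq, SetLike.coe_sort_coe,
    SetLike.coe_sort_coe]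

variable (hG : (⊤ : Subgroup G) ∈ CD G)
include hG

lemma mem_CD_iff {H : Subgroup G} : H ∈ CD G ↔ cdMeasure H = cdMeasure (⊤ : Subgroup G) := by
  constructor
  · intro h
    exact le_antisymm (hG H) (h ⊤)
  · intro h K
    rw [h]; exact hG K

lemma cdMeasure_pos : 0 < cdMeasure (⊤ : Subgroup G) :=
  Nat.mul_pos (card_pos _) (card_pos _)

omit [Group G] [Fintype G] hG in
lemma nat_eq_of_mul_eq {x X y Y : ℕ} (hx : x ≤ X) (hy : y ≤ Y) (h : x * y = X * Y)
    (hypos : 0 < y) (hXpos : 0 < X) : x = X ∧ y = Y := by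
  have hYpos : 0 < Y := lt_of_lt_of_le hypos hy
  have hxX : x = X := by
    by_contra hne
    have hlt : x < X := lt_of_le_of_ne hx hne
    have h1 : x * y ≤ x * Y := Nat.mul_le_mul_left x hy
    have h2 : x * Y < X * Y := mul_lt_mul_of_pos_right hlt hYpos
    omega
  subst hxX
  exact ⟨rfl, Nat.eq_of_mul_eq_mul_left hXpos h⟩

omit hG in
lemma cdMeasure_def (H : Subgroup G) :
    cdMeasure H = Nat.card H * Nat.card (Subgroup.centralizer (H : Set G)) := rfl

/-- Main structural lemma: CD is closed under meet and join, with set-level product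
equalities. -/
lemma cd_lattice {H K : Subgroup G} (hH : H ∈ CD G) (hK : K ∈ CD G) :
    (H ⊓ K) ∈ CD G ∧ (H ⊔ K) ∈ CD G ∧ (↑H * ↑K : Set G) = ↑(H ⊔ K) ∧
    (↑(Subgroup.centralizer (H : Set G)) * ↑(Subgroup.centralizer (K : Set G)) : Set G)
      = ↑(Subgroup.centralizer ((H ⊓ K : Subgroup G) : Set G)) := by
  have hMpos := cdMeasure_pos hG
  rw [mem_CD_iff hG] at hH hK
  simp only [mem_CD_iff hG]
  set M := cdMeasure (⊤ : Subgroup G) with hM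
  set a := Nat.card (↑H * ↑K : Set G) with ha
  set A := Nat.card ↥(H ⊔ K) with hA
  set b := Nat.card ↥(H ⊓ K) with hb
  set c := Nat.card
    (↑(Subgroup.centralizer (H : Set G)) * ↑(Subgroup.centralizer (K : Set G)) : Set G) with hc
  set C := Nat.card ↥(Subgroup.centralizer ((H ⊓ K : Subgroup G) : Set G)) with hC
  set d := Nat.card ↥(Subgroup.centralizer (H : Set G) ⊓ Subgroup.centralizer (K : Set G))
    with hd
  have hab : a * b = Nat.card H * Nat.card K := card_mul_mul_card_inf H K
  have hcd : c * d = Nat.card ↥(Subgroup.centralizer (H : Set G))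
      * Nat.card ↥(Subgroup.centralizer (K : Set G)) := card_mul_mul_card_inf _ _
  have haA : a ≤ A := by
    rw [ha, hA, ← SetLike.coe_sort_coe (H ⊔ K), Nat.card_coe_set_eq, Nat.card_coe_set_eq]
    exact Set.ncard_le_ncard (mul_subset_sup H K) (Set.toFinite _)
  have hcC : c ≤ C := by
    rw [hc, hC, ← SetLike.coe_sort_coe, Nat.card_coe_set_eq, Nat.card_coe_set_eq]
    exact Set.ncard_le_ncard (cent_mul_subset H K) (Set.toFinite _)
  have hsupM : cdMeasure (H ⊔ K) = A * d := by
    rw [hA, hd, ← centralizer_sup']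
    rfl
  have hinfM : cdMeasure (H ⊓ K) = b * C := by
    rw [hb, hC]
    rfl
  have hsup_le : A * d ≤ M := by
    rw [← hsupM, hM]; exact hG _
  have hinf_le : b * C ≤ M := by
    rw [← hinfM, hM]; exact hG _
  have hbig : M * M = (a * b) * (c * d) := by
    calc M * M = cdMeasure H * cdMeasure K := by rw [hH, hK]
      _ = (Nat.card H * Nat.card K) *
          (Nat.card ↥(Subgroup.centralizer (H : Set G))
            * Nat.card ↥(Subgroup.centralizer (K : Set G))) := by
          rw [cdMeasure_def, cdMeasure_def]; ring
      _ = (a * b) * (c * d) := by rw [hab, hcd]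
  have hbpos : 0 < b := card_pos _
  have hdpos : 0 < d := card_pos _
  have hApos : 0 < A := card_pos _
  have hCpos : 0 < C := card_pos _
  have hcpos : 0 < c := by
    have h1 : 0 < c * d := by
      rw [hcd]; exact Nat.mul_pos (card_pos _) (card_pos _)
    exact Nat.pos_of_ne_zero fun h0 => by simp [h0] at h1
  have hchain : (A * d) * (b * C) = M * M := by
    apply le_antisymm (Nat.mul_le_mul hsup_le hinf_le)
    calc M * M = (a * b) * (c * d) := hbig
      _ ≤ (A * b) * (C * d) :=
          Nat.mul_le_mul (Nat.mul_le_mul_right _ haA) (Nat.mul_le_mul_right _ hcC)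
      _ = (A * d) * (b * C) := by ring
  obtain ⟨hAd, hbC⟩ := nat_eq_of_mul_eq hsup_le hinf_le hchain
    (Nat.mul_pos hbpos hCpos) hMpos
  have hac : (a * c) * (b * d) = (A * C) * (b * d) := by
    calc (a * c) * (b * d) = (a * b) * (c * d) := by ring
      _ = M * M := hbig.symm
      _ = (A * d) * (b * C) := hchain.symm
      _ = (A * C) * (b * d) := by ring
  have hacAC : a * c = A * C := Nat.eq_of_mul_eq_mul_right (Nat.mul_pos hbpos hdpos) hac
  obtain ⟨haA2, hcC2⟩ := nat_eq_of_mul_eq haA hcC hacAC hcpos hApos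
  refine ⟨by rw [hinfM, hbC, hM], by rw [hsupM, hAd, hM], ?_, ?_⟩
  · apply Set.eq_of_subset_of_ncard_le (mul_subset_sup H K)
    rw [← Nat.card_coe_set_eq, ← Nat.card_coe_set_eq, SetLike.coe_sort_coe]
    rw [← hA, ← ha, haA2]
  · apply Set.eq_of_subset_of_ncard_le (cent_mul_subset H K)
    rw [← Nat.card_coe_set_eq, ← Nat.card_coe_set_eq, SetLike.coe_sort_coe]
    rw [← hC, ← hc, hcC2]

lemma cent_cd {H : Subgroup G} (hH : H ∈ CD G) :
    Subgroup.centralizer (H : Set G) ∈ CD G ∧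
    Subgroup.centralizer ((Subgroup.centralizer (H : Set G) : Subgroup G) : Set G) = H := by
  have hle : H ≤ Subgroup.centralizer
      ((Subgroup.centralizer (H : Set G) : Subgroup G) : Set G) :=
    Subgroup.le_centralizer_iff.mpr le_rfl
  rw [mem_CD_iff hG] at hH
  have h1 : cdMeasure H ≤ cdMeasure (Subgroup.centralizer (H : Set G)) := by
    rw [cdMeasure_def, cdMeasure_def, mul_comm]
    exact Nat.mul_le_mul_left _ (card_le_of_le hle)
  have h2 : cdMeasure (Subgroup.centralizer (H : Set G)) = cdMeasure (⊤ : Subgroup G) :=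
    le_antisymm (hG _) (by rw [← hH]; exact h1)
  refine ⟨(mem_CD_iff hG).mpr h2, ?_⟩
  have h3 : Nat.card (Subgroup.centralizer (H : Set G))
      * Nat.card (Subgroup.centralizer
          ((Subgroup.centralizer (H : Set G) : Subgroup G) : Set G))
      = Nat.card (Subgroup.centralizer (H : Set G)) * Nat.card H := by
    have := h2.trans hH.symm
    rw [cdMeasure_def, cdMeasure_def] at this
    rw [this]; ring
  have h4 := Nat.eq_of_mul_eq_mul_left (card_pos _) h3
  exact (eq_of_le_of_card_le hle (le_of_eq h4)).symm

omit hG in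
lemma cent_T_eq_top {T : Subgroup G}
    (hTle : T ≤ Subgroup.centralizer (((⊤ : Subgroup G) : Subgroup G) : Set G)) :
    Subgroup.centralizer (T : Set G) = ⊤ := by
  rw [eq_top_iff']
  intro g
  rw [Subgroup.mem_centralizer_iff]
  intro t ht
  exact (Subgroup.mem_centralizer_iff.mp (hTle ht) g (by simp)).symm

lemma conj_mem_CD {H : Subgroup G} (hH : H ∈ CD G) (g : G) :
    H.map (MulAut.conj g).toMonoidHom ∈ CD G := by
  rw [mem_CD_iff hG] at hH ⊢
  rw [cdMeasure_map_conj]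
  exact hH

end Finite
end CDaux

theorem stmt5 {G : Type*} [Group G] [Fintype G] (hG : (⊤ : Subgroup G) ∈ CD G)
    (T : Subgroup G) (hT : T ∈ CD G) (hTleast : ∀ X ∈ CD G, T ≤ X) :
    (∀ A ∈ CD G, (T < A ∧ ¬ ∃ R ∈ CD G, T < R ∧ R < A) → A.Normal) ∧
    (∀ B ∈ CD G, (B < ⊤ ∧ ¬ ∃ R ∈ CD G, B < R ∧ R < ⊤) → B.Normal) := by
  open CDaux Subgroup in
  constructor
  · rintro A hA ⟨hTA, hnob⟩
    apply normal_of_conj_fixed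
    intro g
    by_contra hne
    have hKCD := conj_mem_CD hG hA g
    have hcard : Nat.card (A.map (MulAut.conj g).toMonoidHom) = Nat.card A :=
      card_map_conj g A
    obtain ⟨hmeet, hjoin, hmul, hcmul⟩ := cd_lattice hG hA hKCD
    have hne' : ¬ (A ≤ A.map (MulAut.conj g).toMonoidHom) := by
      intro hle
      exact hne (eq_of_le_of_card_le hle (le_of_eq hcard)).symm
    have hlt : A ⊓ A.map (MulAut.conj g).toMonoidHom < A :=
      lt_of_le_of_ne inf_le_left (fun heq => hne' (le_trans (le_of_eq heq.symm) inf_le_right))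
    have hTAK : T ≤ A ⊓ A.map (MulAut.conj g).toMonoidHom := hTleast _ hmeet
    have hT_eq : A ⊓ A.map (MulAut.conj g).toMonoidHom = T := by
      by_contra hne2
      exact hnob ⟨_, hmeet, lt_of_le_of_ne hTAK (fun h => hne2 h.symm), hlt⟩
    have hZ : T ≤ Subgroup.centralizer (((⊤ : Subgroup G) : Subgroup G) : Set G) :=
      hTleast _ ((cent_cd hG hG).1)
    have hCT : Subgroup.centralizer (T : Set G) = ⊤ := cent_T_eq_top hZ
    have hCK : Subgroup.centralizer ((A.map (MulAut.conj g).toMonoidHom : Subgroup G) : Set G)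
        = (Subgroup.centralizer (A : Set G)).map (MulAut.conj g).toMonoidHom :=
      centralizer_map_conj g A
    have huniv : (↑(Subgroup.centralizer (A : Set G)) *
        ↑((Subgroup.centralizer (A : Set G)).map (MulAut.conj g).toMonoidHom) : Set G)
          = Set.univ := by
      rw [← hCK, hcmul, hT_eq, hCT]
      simp
    have hfix := conj_eq_of_mul_eq_univ (Subgroup.centralizer (A : Set G)) g huniv
    have hCC : Subgroup.centralizer
        ((A.map (MulAut.conj g).toMonoidHom : Subgroup G) : Set G)
          = Subgroup.centralizer (A : Set G) := by rw [hCK, hfix]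
    have h1 := (cent_cd hG hA).2
    have h2 := (cent_cd hG hKCD).2
    exact hne (by rw [← h2, hCC, h1])
  · rintro B hB ⟨hBlt, hnob⟩
    apply normal_of_conj_fixed
    intro g
    by_contra hne
    have hKCD := conj_mem_CD hG hB g
    have hcard : Nat.card (B.map (MulAut.conj g).toMonoidHom) = Nat.card B :=
      card_map_conj g B
    obtain ⟨hmeet, hjoin, hmul, hcmul⟩ := cd_lattice hG hB hKCD
    have hne' : ¬ (B.map (MulAut.conj g).toMonoidHom ≤ B) := by
      intro hle
      exact hne (eq_of_le_of_card_le hle (le_of_eq hcard.symm))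
    have hlt : B < B ⊔ B.map (MulAut.conj g).toMonoidHom :=
      lt_of_le_of_ne le_sup_left (fun heq => hne' (le_trans le_sup_right (le_of_eq heq.symm)))
    have htop : B ⊔ B.map (MulAut.conj g).toMonoidHom = ⊤ := by
      by_contra hne2
      exact hnob ⟨_, hjoin, hlt, lt_of_le_of_ne le_top hne2⟩
    have huniv : (↑B * ↑(B.map (MulAut.conj g).toMonoidHom) : Set G) = Set.univ := by
      rw [hmul, htop]
      simp
    exact hne (conj_eq_of_mul_eq_univ B g huniv)
end
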